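/- Let λ ≥ 1 and let ⟨H,T⟩ be an HT-interpretation over an alphabet containing 𝒯. If ⟨H,T⟩ is timed wrt λ with induced timing function τ, then ⟨H,T⟩ is an HT-model of Δ_{λ,ν} for ν = τ(λ−1). -/

import Mathlib

namespace MetricASP

/-- Propositional formulas over atoms `β`. -/
inductive PF (β : Type) : Type
  | fls
  | atom (a : β)
  | and (φ ψ : PF β)
  | or (φ ψ : PF β)
  | imp (φ ψ : PF β)

def PF.neg {β : Type} (φ : PF β) : PF β := .imp φ .fls
def PF.top {β : Type} : PF β := PF.neg .fls

def bigOr {β : Type} (l : List (PF β)) : PF β := l.foldr .or .fls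
def bigAnd {β : Type} (l : List (PF β)) : PF β := l.foldr .and PF.top

/-- Here-and-there satisfaction. -/
def HSat {β : Type} : Set β → Set β → PF β → Prop
  | _, _, .fls => False
  | H, _, .atom a => a ∈ H
  | H, T, .and φ ψ => HSat H T φ ∧ HSat H T ψ
  | H, T, .or φ ψ => HSat H T φ ∨ HSat H T ψ
  | H, T, .imp φ ψ => (HSat H T φ → HSat H T ψ) ∧ (HSat T T φ → HSat T T ψ)

def HTModels {β : Type} (H T : Set β) (Γ : Set (PF β)) : Prop :=
  ∀ φ ∈ Γ, HSat H T φ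

/-- `T` (as the total interpretation `⟨T,T⟩`) is an equilibrium model of `Γ`. -/
def EqModel {β : Type} (T : Set β) (Γ : Set (PF β)) : Prop :=
  HTModels T T Γ ∧ ∀ H : Set β, H ⊂ T → ¬ HTModels H T Γ


/-- Timing function wrt `lam`. -/
def IsTiming (lam : ℕ) (τ : ℕ → ℕ) : Prop :=
  τ 0 = 0 ∧ ∀ k, k + 1 < lam → τ k < τ (k + 1)

/-- `Δ_{λ,ν}` over an alphabet `β` containing the atoms `t_{k,d}` given by `tv`. -/
def deltaG {β : Type} (tv : ℕ → ℕ → β) (lam ν : ℕ) : Set (PF β) :=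
  insert (PF.atom (tv 0 0))
    {φ | ∃ k d, k + 1 < lam ∧ d ≤ ν ∧
      φ = PF.imp (.atom (tv k d))
        (bigOr (((List.range (ν + 1)).filter (fun d' => decide (d < d'))).map
          (fun d' => PF.atom (tv (k + 1) d'))))}



lemma hsat_bigOr_of_mem {β : Type} (H T : Set β) (l : List (PF β)) (φ : PF β)
    (hφ : φ ∈ l) (h : HSat H T φ) : HSat H T (bigOr l) := by
  induction l with
  | nil => exact absurd hφ List.not_mem_nil
  | cons a l ih =>
    show HSat H T a ∨ HSat H T (bigOr l)
    rcases List.mem_cons.mp hφ with rfl | hm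
    · exact Or.inl h
    · exact Or.inr (ih hm)

lemma timing_mono {lam : ℕ} {τ : ℕ → ℕ} (hτ : IsTiming lam τ)
    {k m : ℕ} (hkm : k ≤ m) (hm : m < lam) : τ k ≤ τ m := by
  induction m with
  | zero => simp_all
  | succ n ih =>
    rcases Nat.lt_succ_iff_lt_or_eq.mp (Nat.lt_succ_of_le hkm) with h | h
    · exact le_trans (ih (by omega) (by omega)) (le_of_lt (hτ.2 n hm))
    · exact le_of_eq (by rw [h])

theorem stmt10 {β : Type} (tv : ℕ → ℕ → β)
    (htv : ∀ k d k' d', tv k d = tv k' d' → k = k' ∧ d = d')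
    (lam : ℕ) (hlam : 1 ≤ lam) (H T : Set β) (hHT : H ⊆ T)
    (τ : ℕ → ℕ) (hτ : IsTiming lam τ)
    (hTimed : ∀ k, k < lam → ∀ d, ((tv k d ∈ H) ↔ τ k = d) ∧ ((tv k d ∈ T) ↔ τ k = d)) :
    HTModels H T (deltaG tv lam (τ (lam - 1))) := by

  intro φ hφ
  rcases hφ with rfl | ⟨k, d, hk, hd, rfl⟩
  · exact ((hTimed 0 (by omega) 0).1).mpr hτ.1
  · have hk1 : k + 1 < lam := hk
    have hnext : d < τ (k + 1) → HSat H T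
        (bigOr (((List.range (τ (lam - 1) + 1)).filter (fun d' => decide (d < d'))).map
          (fun d' => PF.atom (tv (k + 1) d')))) := by
      intro hlt
      apply hsat_bigOr_of_mem H T _ (PF.atom (tv (k + 1) (τ (k + 1))))
      · simp only [List.mem_map, List.mem_filter, List.mem_range, decide_eq_true_eq]
        exact ⟨τ (k + 1), ⟨by
          have := timing_mono hτ (show k + 1 ≤ lam - 1 by omega) (by omega); omega, hlt⟩, rfl⟩
      · exact ((hTimed (k + 1) hk1 (τ (k + 1))).1).mpr rfl
    constructor
    · intro hmem
      have hτk : τ k = d := ((hTimed k (by omega) d).1).mp hmem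
      exact hnext (hτk ▸ hτ.2 k hk1)
    · intro hmem
      have hτk : τ k = d := ((hTimed k (by omega) d).2).mp hmem
      have hlt : d < τ (k + 1) := hτk ▸ hτ.2 k hk1
      apply hsat_bigOr_of_mem T T _ (PF.atom (tv (k + 1) (τ (k + 1))))
      · simp only [List.mem_map, List.mem_filter, List.mem_range, decide_eq_true_eq]
        exact ⟨τ (k + 1), ⟨by
          have := timing_mono hτ (show k + 1 ≤ lam - 1 by omega) (by omega); omega, hlt⟩, rfl⟩
      · exact ((hTimed (k + 1) hk1 (τ (k + 1))).2).mpr rfl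


end MetricASP
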